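/- Let G be a group and D a finite central subgroup of G. Let {H_i | i ∈ ℕ} be a descending chain of subgroups of G with ⋂_{i∈ℕ} H_i = 1. Then ⋂_{i∈ℕ} D·H_i = D. -/
import Mathlib


theorem stmt_1 {G : Type*} [Group G] (D : Subgroup G) (hDc : D ≤ Subgroup.center G)
    (hDfin : Finite D) (H : ℕ → Subgroup G) (hdesc : ∀ i, H (i + 1) ≤ H i)
    (hint : (⨅ i : ℕ, H i) = ⊥) :
    (⨅ i : ℕ, D ⊔ H i) = D := by
  have hanti : Antitone H := antitone_nat_of_succ_le hdesc
  haveI hnorm : D.Normal := ⟨fun n hn g => by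
    have := (Subgroup.mem_center_iff.mp (hDc hn)) g
    rw [this, mul_assoc, mul_inv_cancel, mul_one]; exact hn⟩
  apply le_antisymm
  · intro x hx
    simp only [Subgroup.mem_iInf] at hx
    have hex : ∀ i, ∃ d : D, (d : G)⁻¹ * x ∈ H i := by
      intro i
      have : x ∈ (↑(H i ⊔ D) : Set G) := by
        rw [sup_comm] at *; exact hx i
      rw [Subgroup.mul_normal] at this
      obtain ⟨h, hh, d, hd, rfl⟩ := this
      exact ⟨⟨d, hd⟩, by
        have := (Subgroup.mem_center_iff.mp (hDc hd)) h
        simpa [← mul_assoc, this] using hh⟩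
    choose f hf using hex
    obtain ⟨y, hy⟩ := Finite.exists_infinite_fiber f
    have hinf : (f ⁻¹' {y}).Infinite := Set.infinite_coe_iff.mp hy
    have key : (y : G)⁻¹ * x ∈ ⨅ i, H i := by
      rw [Subgroup.mem_iInf]
      intro i
      obtain ⟨j, hj, hij⟩ := hinf.exists_gt i
      have := hf j
      rw [Set.mem_preimage, Set.mem_singleton_iff] at hj
      rw [hj] at this
      exact hanti hij.le this
    rw [hint, Subgroup.mem_bot] at key
    have : x = (y : G) := by
      have := congrArg (fun z => (y : G) * z) key
      simpa [← mul_assoc] using this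
    rw [this]; exact y.2
  · exact le_iInf fun i => le_sup_left
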